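/- Under Assumptions A1 (continuity and compactness), A2 (strict dissipativity), A3 (terminal conditions) and A4 (terminal cost on orbit), there exist class-K_∞ functions ᾱ_low and ᾱ_up such that the rotated terminal cost satisfies ᾱ_low(||(x,u_f(x))||_{Π*}) ≤ Ṽ_f(x) ≤ ᾱ_up(||(x,u_f(x))||_{Π*}) for all x ∈ X_f, where u_f is the terminal control law from A3; in particular ᾱ_low can be taken equal to α_ℓ̃ from A2. -/

import Mathlib

open Filter Topology

section EMPCDefs

variable {E F : Type*} [NormedAddCommGroup E] [NormedAddCommGroup F]

/-- State trajectory `x_u(k, x₀)` of the system `x⁺ = f(x, u)` under input sequence `u`. -/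
def traj (f : E × F → E) (x : E) (u : ℕ → F) : ℕ → E
  | 0 => x
  | k + 1 => f (traj f x u k, u k)

/-- `u ∈ U^N(x)`: input sequences of length `N` keeping the state in `X`. -/
def FeasN (f : E × F → E) (X : Set E) (U : Set F) (x : E) (N : ℕ) (u : ℕ → F) : Prop :=
  (∀ k < N, u k ∈ U) ∧ ∀ k ≤ N, traj f x u k ∈ X

/-- `u ∈ U^∞(x)`: infinite input sequences keeping the state in `X`. -/
def FeasInf (f : E × F → E) (X : Set E) (U : Set F) (x : E) (u : ℕ → F) : Prop :=
  (∀ k, u k ∈ U) ∧ ∀ k, traj f x u k ∈ X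

/-- The feasible set `X_N` of the terminal-constrained problem. -/
def XN (f : E × F → E) (X : Set E) (U : Set F) (Xf : Set E) (N : ℕ) : Set E :=
  {x | ∃ u : ℕ → F, FeasN f X U x N u ∧ traj f x u N ∈ Xf}

/-- The feasible set `X_∞`. -/
def XInf (f : E × F → E) (X : Set E) (U : Set F) : Set E :=
  {x | ∃ u : ℕ → F, FeasInf f X U x u}

/-- Distance `‖(x,u)‖_Π` of a state-input pair to a `p`-periodic orbit `Π = (i ↦ P i)`. -/
noncomputable def distOrbit (p : ℕ) (P : ℕ → E × F) (z : E × F) : ℝ :=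
  ⨅ i : Fin p, ‖z - P ↑i‖

/-- Distance `‖x‖_{Π_X}` of a state to the state part of a `p`-periodic orbit. -/
noncomputable def distOrbitX (p : ℕ) (PX : ℕ → E) (x : E) : ℝ :=
  ⨅ i : Fin p, ‖x - PX ↑i‖

/-- `Π = (Π_X, Π_U)` (given on `{0, …, p-1}`) is a feasible `p`-periodic orbit. -/
def FeasOrbit (f : E × F → E) (X : Set E) (U : Set F) (p : ℕ)
    (PX : ℕ → E) (PU : ℕ → F) : Prop :=
  (∀ i < p, PX i ∈ X) ∧ (∀ i < p, PU i ∈ U) ∧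
    ∀ i < p, PX ((i + 1) % p) = f (PX i, PU i)

/-- Average cost `ℓ_Π = (1/p) Σ_{i<p} ℓ(Π(i))` of a `p`-periodic orbit. -/
noncomputable def avgCost (ℓ : E × F → ℝ) (p : ℕ) (PX : ℕ → E) (PU : ℕ → F) : ℝ :=
  (1 / (p : ℝ)) * ∑ i ∈ Finset.range p, ℓ (PX i, PU i)

/-- Average `(1/p) Σ_{i<p} g(Π_X(i))` of a function over the state part of an orbit. -/
noncomputable def avgOrbit (g : E → ℝ) (p : ℕ) (PX : ℕ → E) : ℝ :=
  (1 / (p : ℝ)) * ∑ i ∈ Finset.range p, g (PX i)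

/-- `Π*` is an optimal periodic orbit: it is feasible and its average cost is the
infimum of the average costs over all feasible periodic orbits. -/
def IsOptimalOrbit (f : E × F → E) (X : Set E) (U : Set F) (ℓ : E × F → ℝ) (p : ℕ)
    (PX : ℕ → E) (PU : ℕ → F) : Prop :=
  FeasOrbit f X U p PX PU ∧
    ∀ q : ℕ, 0 < q → ∀ (QX : ℕ → E) (QU : ℕ → F),
      FeasOrbit f X U q QX QU → avgCost ℓ p PX PU ≤ avgCost ℓ q QX QU

/-- Accumulated stage cost `J^1_K(x, u)`. -/
noncomputable def J1 (f : E × F → E) (ℓ : E × F → ℝ) (x : E) (u : ℕ → F) (K : ℕ) : ℝ :=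
  ∑ k ∈ Finset.range K, ℓ (traj f x u k, u k)

/-- Finite-horizon cost functional `J_N(x, u)` with terminal cost `Vf`. -/
noncomputable def JN (f : E × F → E) (ℓ : E × F → ℝ) (Vf : E → ℝ) (x : E) (u : ℕ → F)
    (N : ℕ) : ℝ :=
  J1 f ℓ x u N + Vf (traj f x u N)

/-- Optimal value function `V_N(x)` of the terminal-constrained problem. -/
noncomputable def VN (f : E × F → E) (X : Set E) (U : Set F) (ℓ : E × F → ℝ) (Vf : E → ℝ)
    (Xf : Set E) (N : ℕ) (x : E) : ℝ :=
  sInf ((fun u => JN f ℓ Vf x u N) '' {u : ℕ → F | FeasN f X U x N u ∧ traj f x u N ∈ Xf})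

/-- Rotated stage cost `ℓ̃(x,u) = ℓ(x,u) - ℓ_{Π*} + λ(x) - λ(f(x,u))`. -/
def rotCost (f : E × F → E) (ℓ : E × F → ℝ) (lam : E → ℝ) (lp : ℝ) (z : E × F) : ℝ :=
  ℓ z - lp + lam z.1 - lam (f z)

/-- Finite-horizon Cesàro cost `J^ces_K(x,u) = Σ_{k<K} (1 - k/K) ℓ(x_u(k,x), u(k))`. -/
noncomputable def Jces (f : E × F → E) (ℓ : E × F → ℝ) (x : E) (u : ℕ → F) (K : ℕ) : ℝ :=
  ∑ k ∈ Finset.range K, (1 - (k : ℝ) / (K : ℝ)) * ℓ (traj f x u k, u k)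

/-- Infinite-horizon Cesàro cost `J^ces_∞(x,u) = limsup_K J^ces_K(x,u)`. -/
noncomputable def JcesInf (f : E × F → E) (ℓ : E × F → ℝ) (x : E) (u : ℕ → F) : ℝ :=
  limsup (fun K : ℕ => Jces f ℓ x u K) atTop

/-- Unconditioned infinite-horizon value `V^uc_∞(x)`. -/
noncomputable def VucInf (f : E × F → E) (X : Set E) (U : Set F) (ℓ : E × F → ℝ)
    (x : E) : ℝ :=
  sInf ((fun u => JcesInf f ℓ x u) '' {u : ℕ → F | FeasInf f X U x u})

/-- Closed-loop state trajectory `x_μ(k, x)` under a feedback law `μ`. -/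
def trajCl (f : E × F → E) (μ : E → F) (x : E) : ℕ → E
  | 0 => x
  | k + 1 => f (trajCl f μ x k, μ (trajCl f μ x k))

/-- Closed-loop finite-horizon Cesàro cost `J^cl_K(x, μ)`. -/
noncomputable def JclK (f : E × F → E) (ℓ : E × F → ℝ) (μ : E → F) (x : E) (K : ℕ) : ℝ :=
  ∑ k ∈ Finset.range K, (1 - (k : ℝ) / (K : ℝ)) * ℓ (trajCl f μ x k, μ (trajCl f μ x k))

/-- Closed-loop infinite-horizon Cesàro cost `J^cl_∞(x, μ)`. -/
noncomputable def JclInf (f : E × F → E) (ℓ : E × F → ℝ) (μ : E → F) (x : E) : ℝ :=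
  limsup (fun K : ℕ => JclK f ℓ μ x K) atTop

end EMPCDefs

/-- Class `K_∞` comparison functions `[0,∞) → [0,∞)`. -/
def IsKInf (α : ℝ → ℝ) : Prop :=
  ContinuousOn α (Set.Ici 0) ∧ StrictMonoOn α (Set.Ici 0) ∧ α 0 = 0 ∧
    Filter.Tendsto α Filter.atTop Filter.atTop

/-- Class `L` comparison functions `[0,∞) → [0,∞)`. -/
def IsClassL (σ : ℝ → ℝ) : Prop :=
  ContinuousOn σ (Set.Ici 0) ∧ AntitoneOn σ (Set.Ici 0) ∧ (∀ t, 0 ≤ t → 0 ≤ σ t) ∧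
    Filter.Tendsto σ Filter.atTop (nhds 0)



lemma sum_cyc {β : Type*} [AddCommMonoid β] (p : ℕ) (hp : 0 < p) (g : ℕ → β) :
    ∑ i ∈ Finset.range p, g ((i + 1) % p) = ∑ i ∈ Finset.range p, g i := by
  obtain ⟨n, rfl⟩ := Nat.exists_eq_succ_of_ne_zero hp.ne'
  rw [Finset.sum_range_succ, Finset.sum_range_succ' g n]
  congr 1
  · apply Finset.sum_congr rfl
    intro i hi
    rw [Nat.mod_eq_of_lt (by simp at hi; omega)]
  · simp

lemma kinf_dominating (m : ℝ → ℝ) (hm : Monotone m)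
    (hm0 : ∀ r, 0 ≤ m r) (hmz : m 0 = 0)
    (hlim : Tendsto m (nhdsWithin 0 (Set.Ici 0)) (nhds 0)) :
    ∃ α : ℝ → ℝ, IsKInf α ∧ ∀ r, 0 ≤ r → m r ≤ α r := by
  have hFint : ∀ a b : ℝ, IntervalIntegrable m MeasureTheory.volume a b :=
    fun a b => (hm.monotoneOn _).intervalIntegrable
  have hint : ∀ r : ℝ, IntervalIntegrable (fun t => m (r * t))
      MeasureTheory.volume 1 2 := by
    intro r
    rcases le_or_gt 0 r with hr | hr
    · exact ((hm.comp (monotone_mul_left_of_nonneg hr)).monotoneOn _).intervalIntegrable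
    · have : Antitone fun t => m (r * t) := fun a b hab => hm (by nlinarith)
      exact (this.antitoneOn _).intervalIntegrable
  set I : ℝ → ℝ := fun r => ∫ t in (1:ℝ)..2, m (r * t) with hIdef
  have hInonneg : ∀ r, 0 ≤ I r := by
    intro r
    apply intervalIntegral.integral_nonneg (by norm_num)
    intro u _; exact hm0 _
  have hImono : ∀ r₁ r₂ : ℝ, 0 ≤ r₁ → r₁ ≤ r₂ → I r₁ ≤ I r₂ := by
    intro r₁ r₂ h1 h
    apply intervalIntegral.integral_mono_on (by norm_num) (hint r₁) (hint r₂)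
    intro t ht
    exact hm (by nlinarith [ht.1])
  have hIge : ∀ r : ℝ, 0 ≤ r → m r ≤ I r := by
    intro r hr
    have := intervalIntegral.integral_mono_on (a := 1) (b := 2)
      (f := fun _ : ℝ => m r) (g := fun t => m (r * t)) (by norm_num)
      (intervalIntegrable_const) (hint r) ?_
    · simp only [intervalIntegral.integral_const] at this
      refine le_trans (by norm_num) (le_trans this le_rfl)
    · intro t ht; exact hm (by nlinarith [ht.1])
  have hIle : ∀ r : ℝ, 0 ≤ r → I r ≤ m (2 * r) := by
    intro r hr
    have := intervalIntegral.integral_mono_on (a := 1) (b := 2)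
      (f := fun t => m (r * t)) (g := fun _ : ℝ => m (2 * r)) (by norm_num)
      (hint r) (intervalIntegrable_const) ?_
    · simp only [intervalIntegral.integral_const] at this
      refine le_trans this ?_
      norm_num
    · intro t ht; exact hm (by nlinarith [ht.2])
  refine ⟨fun r => r + I r, ⟨?_, ?_, ?_, ?_⟩, ?_⟩
  · -- ContinuousOn on Ici 0
    intro r₀ hr₀
    rcases eq_or_lt_of_le (Set.mem_Ici.mp hr₀) with h0 | h0
    · -- continuity at 0 within Ici 0 : squeeze
      subst h0
      have hα0 : (fun r => r + I r) 0 = 0 := by simp [hIdef, hmz]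
      have hgoal : (0:ℝ) + I 0 = 0 := by simp [hIdef, hmz]
      show Tendsto _ _ (nhds ((0:ℝ) + I 0))
      rw [hgoal]
      have hub : Tendsto (fun r : ℝ => r + m (2 * r)) (nhdsWithin 0 (Set.Ici 0)) (nhds 0) := by
        have h2 : Tendsto (fun r : ℝ => 2 * r) (nhdsWithin 0 (Set.Ici 0))
            (nhdsWithin 0 (Set.Ici 0)) := by
          apply tendsto_nhdsWithin_of_tendsto_nhds_of_eventually_within
          · have : Continuous (fun r : ℝ => 2 * r) := by continuity
            exact (this.tendsto' 0 0 (by norm_num)).mono_left nhdsWithin_le_nhds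
          · filter_upwards [self_mem_nhdsWithin] with r hr
            exact mul_nonneg (by norm_num) (Set.mem_Ici.mp hr)
        have := (hlim.comp h2)
        have hid : Tendsto (fun r : ℝ => r) (nhdsWithin 0 (Set.Ici 0)) (nhds 0) :=
          tendsto_id.mono_left nhdsWithin_le_nhds
        simpa using hid.add this
      have hlb : Tendsto (fun r : ℝ => r) (nhdsWithin 0 (Set.Ici 0)) (nhds 0) :=
        tendsto_id.mono_left nhdsWithin_le_nhds
      refine tendsto_of_tendsto_of_tendsto_of_le_of_le' hlb hub ?_ ?_
      · filter_upwards with r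
        exact le_add_of_nonneg_right (hInonneg r)
      · filter_upwards [self_mem_nhdsWithin] with r hr
        exact add_le_add_right (hIle r hr) r
    · -- continuity at r₀ > 0
      apply ContinuousAt.continuousWithinAt
      set F : ℝ → ℝ := fun s => ∫ t in (0:ℝ)..s, m t with hFdef
      have hFcont : Continuous F := intervalIntegral.continuous_primitive hFint 0
      have hβ : ContinuousAt (fun r : ℝ => r + r⁻¹ * (F (2 * r) - F r)) r₀ := by
        have hne : r₀ ≠ 0 := ne_of_gt h0
        fun_prop (disch := assumption)
      apply hβ.congr
      filter_upwards [eventually_gt_nhds h0] with r hr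
      have hrne : r ≠ 0 := ne_of_gt hr
      have h1 : I r = r⁻¹ * ∫ x in (r*1)..(r*2), m x := by
        simpa using intervalIntegral.integral_comp_mul_left (a := 1) (b := 2) m hrne
      have h2 : F (2 * r) - F r = ∫ x in r..2 * r, m x :=
        intervalIntegral.integral_interval_sub_left (hFint 0 (2 * r)) (hFint 0 r)
      rw [h1]
      have h2' : (∫ x in (r*1)..(r*2), m x) = F (2 * r) - F r := by
        rw [intervalIntegral.integral_interval_sub_left (hFint 0 (2 * r)) (hFint 0 r)]
        norm_num [mul_comm]
      rw [h2']
  · -- strict mono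
    intro r₁ h1 r₂ h2 h
    exact add_lt_add_of_lt_of_le h (hImono r₁ r₂ h1 h.le)
  · simp [hIdef, hmz]
  · apply tendsto_atTop_mono (fun r => le_add_of_nonneg_right (hInonneg r)) tendsto_id
  · intro r hr
    exact le_add_of_nonneg_left hr |>.trans (add_le_add_right (hIge r hr) r)


theorem stmt1
    (dn dm : ℕ)
    (X : Set (EuclideanSpace ℝ (Fin dn))) (U : Set (EuclideanSpace ℝ (Fin dm)))
    (f : EuclideanSpace ℝ (Fin dn) × EuclideanSpace ℝ (Fin dm) → EuclideanSpace ℝ (Fin dn))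
    (ℓ : EuclideanSpace ℝ (Fin dn) × EuclideanSpace ℝ (Fin dm) → ℝ)
    (p : ℕ) (hp : 0 < p)
    (PX : ℕ → EuclideanSpace ℝ (Fin dn)) (PU : ℕ → EuclideanSpace ℝ (Fin dm))
    (hopt : IsOptimalOrbit f X U ℓ p PX PU)
    -- A1 (continuity and compactness)
    (hcomp : IsCompact (X ×ˢ U))
    (hfc : ContinuousOn f (X ×ˢ U)) (hlc : ContinuousOn ℓ (X ×ˢ U))
    -- A2 (strict dissipativity)
    (lam : EuclideanSpace ℝ (Fin dn) → ℝ) (hlamc : ContinuousOn lam X)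
    (αl : ℝ → ℝ) (hαl : IsKInf αl)
    (hdiss : ∀ x ∈ X, ∀ u ∈ U, f (x, u) ∈ X →
      αl (distOrbit p (fun i => (PX i, PU i)) (x, u)) ≤
        rotCost f ℓ lam (avgCost ℓ p PX PU) (x, u))
    -- A3 (terminal conditions)
    (Xf : Set (EuclideanSpace ℝ (Fin dn))) (hXfc : IsCompact Xf) (hXfX : Xf ⊆ X)
    (hPXf : ∀ i < p, PX i ∈ Xf)
    (Vf : EuclideanSpace ℝ (Fin dn) → ℝ) (hVfc : ContinuousOn Vf Xf)
    (uf : EuclideanSpace ℝ (Fin dn) → EuclideanSpace ℝ (Fin dm))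
    (hufU : ∀ x ∈ Xf, uf x ∈ U) (hufX : ∀ x ∈ Xf, f (x, uf x) ∈ X)
    (hufXf : ∀ x ∈ Xf, f (x, uf x) ∈ Xf)
    (hufD : ∀ x ∈ Xf, Vf (f (x, uf x)) + ℓ (x, uf x) - avgCost ℓ p PX PU ≤ Vf x)
    -- A4 (terminal cost on the optimal orbit)
    (hA4 : ∀ i < p, Vf (PX i) = ℓ (PX i, PU i) - avgCost ℓ p PX PU + Vf (f (PX i, PU i))) :
    ∃ αlow αup : ℝ → ℝ, IsKInf αlow ∧ IsKInf αup ∧ αlow = αl ∧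
      ∀ x ∈ Xf,
        αlow (distOrbit p (fun i => (PX i, PU i)) (x, uf x)) ≤
            Vf x + lam x - avgOrbit Vf p PX - avgOrbit lam p PX ∧
          Vf x + lam x - avgOrbit Vf p PX - avgOrbit lam p PX ≤
            αup (distOrbit p (fun i => (PX i, PU i)) (x, uf x)) := by

  classical
  haveI : Nonempty (Fin p) := Fin.pos_iff_nonempty.mp hp
  set lp := avgCost ℓ p PX PU with hlp
  set W : EuclideanSpace ℝ (Fin dn) → ℝ := fun x => Vf x + lam x with hW
  set c : ℝ := avgOrbit Vf p PX + avgOrbit lam p PX with hc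
  set D : EuclideanSpace ℝ (Fin dn) → ℝ :=
    fun x => distOrbit p (fun i => (PX i, PU i)) (x, uf x) with hD
  have hαl0 : αl 0 = 0 := hαl.2.2.1
  have hαlmono : StrictMonoOn αl (Set.Ici 0) := hαl.2.1
  -- nonnegativity of the orbit distances
  have hDnonneg : ∀ z : EuclideanSpace ℝ (Fin dn) × EuclideanSpace ℝ (Fin dm),
      0 ≤ distOrbit p (fun i => (PX i, PU i)) z :=
    fun z => Real.iInf_nonneg (fun i => norm_nonneg _)
  have hdXnonneg : ∀ x, 0 ≤ distOrbitX p PX x :=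
    fun x => Real.iInf_nonneg (fun i => norm_nonneg _)
  -- Step 1 : key decrease inequality on Xf
  have key : ∀ x ∈ Xf, αl (D x) + W (f (x, uf x)) ≤ W x := by
    intro x hx
    have h1 := hdiss x (hXfX hx) (uf x) (hufU x hx) (hufX x hx)
    have h2 := hufD x hx
    simp only [rotCost] at h1
    simp only [hW, hD]
    linarith
  -- Step 2 : facts about the optimal orbit
  have horbX : ∀ i < p, PX i ∈ X := hopt.1.1
  have horbU : ∀ i < p, PU i ∈ U := hopt.1.2.1
  have horbf : ∀ i < p, PX ((i + 1) % p) = f (PX i, PU i) := hopt.1.2.2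
  have hsumℓ : ∑ i ∈ Finset.range p, ℓ (PX i, PU i) = p * lp := by
    rw [hlp, avgCost]
    field_simp
  -- orbit points have zero distance to the orbit
  have hDorb : ∀ i : Fin p, distOrbit p (fun j => (PX j, PU j)) (PX ↑i, PU ↑i) = 0 := by
    intro i
    refine le_antisymm ?_ (hDnonneg _)
    have := ciInf_le (f := fun j : Fin p => ‖((PX ↑i, PU ↑i) : _ × _) - (PX ↑j, PU ↑j)‖)
      ⟨0, fun y hy => by obtain ⟨j, rfl⟩ := hy; exact norm_nonneg _⟩ i
    simpa [distOrbit] using this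
  -- rotated stage cost vanishes on the orbit
  have hrot0 : ∀ i < p, ℓ (PX i, PU i) - lp + lam (PX i) - lam (PX ((i + 1) % p)) = 0 := by
    have hnn : ∀ i < p, 0 ≤ ℓ (PX i, PU i) - lp + lam (PX i) - lam (PX ((i + 1) % p)) := by
      intro i hi
      have hfx : f (PX i, PU i) ∈ X := by
        rw [← horbf i hi]; exact horbX _ (Nat.mod_lt _ hp)
      have h1 := hdiss (PX i) (horbX i hi) (PU i) (horbU i hi) hfx
      rw [show ((i : ℕ)) = ((⟨i, hi⟩ : Fin p) : ℕ) from rfl] at h1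
      rw [hDorb ⟨i, hi⟩, hαl0] at h1
      simp only [rotCost] at h1
      rw [← horbf i hi] at h1
      simpa using h1
    have hsum : ∑ i ∈ Finset.range p,
        (ℓ (PX i, PU i) - lp + lam (PX i) - lam (PX ((i + 1) % p))) = 0 := by
      have hcyc := sum_cyc p hp (fun j => lam (PX j))
      simp only [Finset.sum_sub_distrib, Finset.sum_add_distrib, hcyc, hsumℓ,
        Finset.sum_const, Finset.card_range, nsmul_eq_mul]
      ring
    intro i hi
    have := (Finset.sum_eq_zero_iff_of_nonneg
      (fun j hj => hnn j (Finset.mem_range.mp hj))).mp hsum i (Finset.mem_range.mpr hi)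
    linarith [this]
  -- W is constant on the orbit
  have hWstep : ∀ i < p, W (PX ((i + 1) % p)) = W (PX i) := by
    intro i hi
    have h4 := hA4 i hi
    rw [← horbf i hi] at h4
    have h0 := hrot0 i hi
    simp only [hW]
    linarith
  have hWorb : ∀ i < p, W (PX i) = W (PX 0) := by
    intro i
    induction i with
    | zero => intro _; rfl
    | succ i ih =>
      intro hi
      have hi' : i < p := Nat.lt_of_succ_lt hi
      have := hWstep i hi'
      rw [Nat.mod_eq_of_lt hi] at this
      rw [this, ih hi']
  have hcW0 : c = W (PX 0) := by
    have : ∑ i ∈ Finset.range p, W (PX i) = p * W (PX 0) := by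
      rw [Finset.sum_congr rfl (fun i hi => hWorb i (Finset.mem_range.mp hi))]
      simp [mul_comm]
    simp only [hc, avgOrbit, hW] at this ⊢
    rw [← mul_add, ← Finset.sum_add_distrib]
    rw [this]
    field_simp
  -- Step 3 : W ≥ c on Xf
  have hXfne : Xf.Nonempty := ⟨PX 0, hPXf 0 hp⟩
  have hWcont : ContinuousOn W Xf := hVfc.add (hlamc.mono hXfX)
  have hWlb : ∀ x ∈ Xf, c ≤ W x := by
    obtain ⟨z, hz, hzmin⟩ := hXfc.exists_isMinOn hXfne hWcont
    have h1 := key z hz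
    have h2 : W z ≤ W (f (z, uf z)) := hzmin (hufXf z hz)
    have h3 : αl (D z) ≤ 0 := by linarith
    have hDz : D z = 0 := by
      by_contra hne
      have hpos : 0 < D z := lt_of_le_of_ne (hDnonneg _) (Ne.symm hne)
      have := hαlmono (Set.self_mem_Ici) (Set.mem_Ici.mpr (hDnonneg _)) hpos
      rw [hαl0] at this
      linarith
    obtain ⟨i, hi⟩ := exists_eq_ciInf_of_finite
      (f := fun j : Fin p => ‖((z, uf z) : _ × _) - (PX ↑j, PU ↑j)‖)
    have hDz' : ‖((z, uf z) : _ × _) - (PX ↑i, PU ↑i)‖ = 0 := by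
      rw [hi]; exact hDz
    have hzeq : z = PX ↑i := by
      have := sub_eq_zero.mp (norm_eq_zero.mp hDz')
      exact congrArg Prod.fst this
    have hWz : W z = c := by
      rw [hzeq, hWorb ↑i i.isLt, hcW0]
    intro x hx
    rw [← hWz]
    exact hzmin hx
  -- Step 4 : the lower bound
  have hlow : ∀ x ∈ Xf, αl (D x) ≤ W x - c := by
    intro x hx
    have h1 := key x hx
    have h2 := hWlb _ (hufXf x hx)
    linarith
  -- Step 5 : the upper bound
  set h : EuclideanSpace ℝ (Fin dn) → ℝ := fun x => W x - c with hh
  have hhcont : ContinuousOn h Xf := hWcont.sub continuousOn_const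
  have hhnn : ∀ x ∈ Xf, 0 ≤ h x := fun x hx => sub_nonneg.mpr (hWlb x hx)
  have hhorb : ∀ i < p, h (PX i) = 0 := by
    intro i hi
    simp only [hh, sub_eq_zero, hWorb i hi, hcW0]
  have hdXorb : ∀ x, ∀ i : Fin p, x = PX ↑i → distOrbitX p PX x = 0 := by
    intro x i hxi
    refine le_antisymm ?_ (hdXnonneg _)
    have := ciInf_le (f := fun j : Fin p => ‖x - PX ↑j‖)
      ⟨0, fun y hy => by obtain ⟨j, rfl⟩ := hy; exact norm_nonneg _⟩ i
    simpa [distOrbitX, hxi] using this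
  set S : ℝ → Set (EuclideanSpace ℝ (Fin dn)) :=
    fun r => {x | x ∈ Xf ∧ distOrbitX p PX x ≤ r} with hS
  set m : ℝ → ℝ := fun r => sSup (h '' S r) with hm
  have hbdd : BddAbove (h '' Xf) := (hXfc.image_of_continuousOn hhcont).bddAbove
  have hbddS : ∀ r, BddAbove (h '' S r) :=
    fun r => hbdd.mono (Set.image_mono (fun x hx => hx.1))
  have hSne : ∀ r, 0 ≤ r → PX 0 ∈ S r := by
    intro r hr
    exact ⟨hPXf 0 hp, (hdXorb (PX 0) ⟨0, hp⟩ rfl) ▸ hr⟩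
  have hSempty : ∀ r, r < 0 → S r = ∅ := by
    intro r hr
    ext x
    simp only [hS, Set.mem_setOf_eq, Set.mem_empty_iff_false, iff_false, not_and]
    intro _
    intro hle
    linarith [hdXnonneg x]
  have hmnn : ∀ r, 0 ≤ m r := by
    intro r
    rcases le_or_gt 0 r with hr | hr
    · have : h (PX 0) ∈ h '' S r := Set.mem_image_of_mem _ (hSne r hr)
      have h0 : h (PX 0) = 0 := hhorb 0 hp
      rw [← h0]
      exact le_csSup (hbddS r) this
    · simp [hm, hSempty r hr, Real.sSup_empty]
  have hmmono : Monotone m := by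
    intro r₁ r₂ h12
    rcases Set.eq_empty_or_nonempty (S r₁) with he | hne
    · simp only [hm, he, Set.image_empty, Real.sSup_empty]
      exact hmnn r₂
    · exact csSup_le_csSup (hbddS r₂) (hne.image h)
        (Set.image_mono (fun x hx => ⟨hx.1, hx.2.trans h12⟩))
  -- each element of the sup-set with distance ≤ r is small when r is small
  have hval : ∀ ε > 0, ∃ δ > 0, ∀ r, 0 ≤ r → r < δ → m r ≤ ε := by
    intro ε hε
    have huc := hXfc.uniformContinuousOn_of_continuous hhcont
    rw [Metric.uniformContinuousOn_iff] at huc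
    obtain ⟨δ, hδ, hδ'⟩ := huc ε hε
    refine ⟨δ, hδ, fun r hr hrδ => ?_⟩
    apply csSup_le ⟨h (PX 0), Set.mem_image_of_mem _ (hSne r hr)⟩
    rintro y ⟨x, ⟨hxXf, hxd⟩, rfl⟩
    obtain ⟨i, hi⟩ := exists_eq_ciInf_of_finite (f := fun j : Fin p => ‖x - PX ↑j‖)
    have hdist : dist x (PX ↑i) < δ := by
      rw [dist_eq_norm, hi]
      calc distOrbitX p PX x ≤ r := hxd
        _ < δ := hrδ
    have := hδ' x hxXf (PX ↑i) (hPXf ↑i i.isLt) hdist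
    rw [Real.dist_eq, hhorb ↑i i.isLt, sub_zero] at this
    have habs := abs_lt.mp this
    linarith [habs.1, habs.2]
  have hmz : m 0 = 0 := by
    refine le_antisymm ?_ (hmnn 0)
    apply csSup_le ⟨h (PX 0), Set.mem_image_of_mem _ (hSne 0 le_rfl)⟩
    rintro y ⟨x, ⟨hxXf, hxd⟩, rfl⟩
    have hd0 : distOrbitX p PX x = 0 := le_antisymm hxd (hdXnonneg x)
    obtain ⟨i, hi⟩ := exists_eq_ciInf_of_finite (f := fun j : Fin p => ‖x - PX ↑j‖)
    have : ‖x - PX ↑i‖ = 0 := by rw [hi]; exact hd0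
    have hxeq : x = PX ↑i := sub_eq_zero.mp (norm_eq_zero.mp this)
    rw [hxeq, hhorb ↑i i.isLt]
  have hlim : Filter.Tendsto m (nhdsWithin 0 (Set.Ici 0)) (nhds 0) := by
    rw [Metric.tendsto_nhdsWithin_nhds]
    intro ε hε
    obtain ⟨δ, hδ, hδ'⟩ := hval (ε / 2) (by linarith)
    refine ⟨δ, hδ, fun {r} hr hrd => ?_⟩
    rw [Real.dist_eq, sub_zero] at hrd ⊢
    rw [abs_of_nonneg (hmnn r)]
    have : m r ≤ ε / 2 := hδ' r hr (by rwa [abs_of_nonneg hr] at hrd)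
    linarith
  obtain ⟨αup, hαup, hαupge⟩ := kinf_dominating m hmmono hmnn hmz hlim
  -- conclusion
  refine ⟨αl, αup, hαl, hαup, rfl, fun x hx => ⟨?_, ?_⟩⟩
  · have := hlow x hx
    simp only [hW, hc] at this
    simp only [hD] at this
    linarith
  · -- upper bound chain
    have h1 : h x ≤ m (distOrbitX p PX x) :=
      le_csSup (hbddS _) (Set.mem_image_of_mem _ ⟨hx, le_rfl⟩)
    have h2 : m (distOrbitX p PX x) ≤ αup (distOrbitX p PX x) :=
      hαupge _ (hdXnonneg x)
    have h3 : distOrbitX p PX x ≤ D x := by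
      apply le_ciInf
      intro i
      refine le_trans (ciInf_le ⟨0, fun y hy => by obtain ⟨j, rfl⟩ := hy; exact norm_nonneg _⟩ i) ?_
      have : ((x, uf x) : _ × _) - (PX ↑i, PU ↑i) = (x - PX ↑i, uf x - PU ↑i) := rfl
      rw [this, Prod.norm_def]
      exact le_sup_left
    have h4 : αup (distOrbitX p PX x) ≤ αup (D x) :=
      hαup.2.1.monotoneOn (Set.mem_Ici.mpr (hdXnonneg x))
        (Set.mem_Ici.mpr (hDnonneg _)) h3
    simp only [hh, hW, hc] at h1
    simp only [hD] at h4
    linarith
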